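/- Under the hypotheses of the previous statement (potential function μ certifying the partition constraints), the maximum flow value from S to T in the subgraph obtained by deleting all cut edges and all edges incident to I (the 'bypass network') is zero. -/
import Mathlib


open Finset

/-- Auxiliary lemma: a flow that only increases a potential `g` along its support,
with potential ≥ 1 on effective sources and ≤ 0 on effective sinks, has value 0. -/
lemma stmt_2_aux {V : Type*} [Fintype V] (S T : Finset V) (f : V × V → ℝ) (g : V → ℝ)
    (hcap : ∀ e, 0 ≤ f e)
    (hcons : ∀ v, v ∉ S → v ∉ T → ∑ u, f (u, v) = ∑ u, f (v, u))
    (hnosrc : ∀ u v, v ∈ S → f (u, v) = 0)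
    (hnosink : ∀ u v, u ∈ T → f (u, v) = 0)
    (h1 : ∀ u v, f (u, v) ≠ 0 → g u ≤ g v)
    (h2 : ∀ s ∈ S, (∑ u, f (s, u)) ≤ g s * ∑ u, f (s, u))
    (h3 : ∀ t ∈ T, g t * (∑ u, f (u, t)) ≤ 0) :
    ∑ s ∈ S, ∑ v, f (s, v) = 0 := by
  classical
  have hkey : (0:ℝ) ≤ ∑ v, g v * ((∑ u, f (u, v)) - ∑ u, f (v, u)) := by
    have hid : ∑ v, g v * ((∑ u, f (u, v)) - ∑ u, f (v, u))
        = ∑ v, ∑ u, f (u, v) * (g v - g u) := by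
      have hswap : ∑ v, ∑ u, g v * f (v, u) = ∑ v, ∑ u, g u * f (u, v) :=
        Finset.sum_comm
      simp only [mul_sub, sub_mul, Finset.mul_sum, Finset.sum_sub_distrib]
      rw [hswap]
      congr 1 <;> · congr 1; ext v; congr 1; ext u; ring
    rw [hid]
    apply Finset.sum_nonneg; intro v _
    apply Finset.sum_nonneg; intro u _
    by_cases hf : f (u, v) = 0
    · simp [hf]
    · exact mul_nonneg (hcap _) (by linarith [h1 u v hf])
  have hbound : ∑ v, g v * ((∑ u, f (u, v)) - ∑ u, f (v, u))
      ≤ ∑ v, -(if v ∈ S then ∑ u, f (v, u) else 0) := by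
    apply Finset.sum_le_sum; intro v _
    by_cases hvS : v ∈ S
    · have hIn : (∑ u, f (u, v)) = 0 :=
        Finset.sum_eq_zero fun u _ => hnosrc u v hvS
      rw [hIn, if_pos hvS]
      have := h2 v hvS
      nlinarith
    · by_cases hvT : v ∈ T
      · have hOut : (∑ u, f (v, u)) = 0 :=
          Finset.sum_eq_zero fun u _ => hnosink v u hvT
        rw [hOut, if_neg hvS]
        have := h3 v hvT
        nlinarith
      · rw [hcons v hvS hvT, if_neg hvS]
        ring_nf
        simp
  have hflt : ∑ v, -(if v ∈ S then ∑ u, f (v, u) else 0)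
      = -∑ s ∈ S, ∑ u, f (s, u) := by
    have h := Finset.sum_ite_mem Finset.univ S (fun v => -(∑ u, f (v, u)))
    rw [Finset.univ_inter] at h
    calc ∑ v, -(if v ∈ S then ∑ u, f (v, u) else 0)
        = ∑ v, (if v ∈ S then -(∑ u, f (v, u)) else 0) := by
          apply Finset.sum_congr rfl; intro v _; split <;> simp
      _ = ∑ s ∈ S, -(∑ u, f (s, u)) := h
      _ = -∑ s ∈ S, ∑ u, f (s, u) := by rw [Finset.sum_neg_distrib]
  have hpos : (0:ℝ) ≤ ∑ s ∈ S, ∑ u, f (s, u) :=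
    Finset.sum_nonneg fun s _ => Finset.sum_nonneg fun u _ => hcap _
  rw [hflt] at hbound
  linarith

theorem stmt_2 {V : Type*} [Fintype V]
    (E : Set (V × V)) (S T I : Finset V)
    (d : V × V → ℕ) (hd : ∀ e, d e ≤ 1)
    (μ : V → ℝ)
    (hμ01 : ∀ x, x ∉ I → 0 ≤ μ x ∧ μ x ≤ 1)
    (hST : ∀ s ∈ S, ∀ t ∈ T, μ s - μ t ≥ 1)
    (hcut : ∀ u v, (u, v) ∈ E → u ∉ I → v ∉ I → (d (u, v) : ℝ) - μ u + μ v ≥ 0)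
    (f : V × V → ℝ)
    -- f is supported on the bypass network: edges of E not incident to I and not cut
    (hsupp : ∀ u v, ¬ ((u, v) ∈ E ∧ u ∉ I ∧ v ∉ I ∧ d (u, v) = 0) → f (u, v) = 0)
    (hcap : ∀ e, 0 ≤ f e ∧ f e ≤ 1)
    (hcons : ∀ v, v ∉ S → v ∉ T → ∑ u, f (u, v) = ∑ u, f (v, u))
    (hnosrc : ∀ u v, v ∈ S → f (u, v) = 0)
    (hnosink : ∀ u v, u ∈ T → f (u, v) = 0) :
    ∑ u ∈ S, ∑ v, f (u, v) = 0 := by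
  have hcap' : ∀ e, 0 ≤ f e := fun e => (hcap e).1
  have hsupp' : ∀ u v, f (u, v) ≠ 0 →
      (u, v) ∈ E ∧ u ∉ I ∧ v ∉ I ∧ d (u, v) = 0 := by
    intro u v hf
    by_contra h
    exact hf (hsupp u v h)
  by_cases hSI : ∀ s ∈ S, s ∈ I
  · apply Finset.sum_eq_zero; intro s hs
    apply Finset.sum_eq_zero; intro v _
    apply hsupp
    rintro ⟨-, hsI, -, -⟩
    exact hsI (hSI s hs)
  · push_neg at hSI
    obtain ⟨s₀, hs₀S, hs₀I⟩ := hSI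
    by_cases hTI : ∀ t ∈ T, t ∈ I
    · -- all sinks are in I : use constant potential 1
      apply stmt_2_aux S T f (fun _ => 1) hcap' hcons hnosrc hnosink
      · intro u v _; exact le_refl 1
      · intro s _; simp
      · intro t ht
        have hIn : (∑ u, f (u, t)) = 0 := by
          apply Finset.sum_eq_zero; intro u _
          apply hsupp
          rintro ⟨-, -, htI, -⟩
          exact htI (hTI t ht)
        simp [hIn]
    · push_neg at hTI
      obtain ⟨t₀, ht₀T, ht₀I⟩ := hTI
      apply stmt_2_aux S T f μ hcap' hcons hnosrc hnosink
      · intro u v hf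
        obtain ⟨hE, huI, hvI, hd0⟩ := hsupp' u v hf
        have := hcut u v hE huI hvI
        rw [hd0] at this
        push_cast at this
        linarith
      · intro s hs
        by_cases hsI : s ∈ I
        · have hOut : (∑ u, f (s, u)) = 0 := by
            apply Finset.sum_eq_zero; intro u _
            apply hsupp
            rintro ⟨-, hsI', -, -⟩
            exact hsI' hsI
          rw [hOut]; simp
        · have h1 : μ s ≥ 1 := by
            have := hST s hs t₀ ht₀T
            have := (hμ01 t₀ ht₀I).1
            linarith
          have hOut : (0:ℝ) ≤ ∑ u, f (s, u) :=
            Finset.sum_nonneg fun u _ => hcap' _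
          nlinarith
      · intro t ht
        have hμt : μ t ≤ 0 := by
          have := hST s₀ hs₀S t ht
          have := (hμ01 s₀ hs₀I).2
          linarith
        have hIn : (0:ℝ) ≤ ∑ u, f (u, t) :=
          Finset.sum_nonneg fun u _ => hcap' _
        exact mul_nonpos_of_nonpos_of_nonneg hμt hIn
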